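/- Fix η < 0 with 1 + pβη < 0, where p = ξ/(-τ). Then along the ray t = η·x, for all sufficiently small x > 0 the focusing-normalized Barenblatt pressure satisfies V_M(x, ξ, ηx, τ) = 0, matching g_{pβ}(x, ηx) = 0. -/

import Mathlib

open Filter

/-- Along a ray `t = η·x` with `η < 0` and `1 + pβη < 0`, the focusing-normalized Barenblatt
pressure vanishes for all sufficiently small `x > 0`, matching `g_{pβ}(x, ηx) = 0`. -/
theorem stmt_8 (m τ ξ : ℝ) (hm : 1 < m) (hτ : τ < 0) (hξ : 0 < ξ)
    (β p : ℝ) (hβ : β = 1 / (m - 1)) (hp : p = ξ / (-τ))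
    (V : ℝ → ℝ → ℝ)
    (hV : ∀ x t, V x t = ξ ^ 2 * β / (2 * (-τ)) * (1 - t / τ) ^ (2 * β - 1) *
      max (1 - (1 - x / ξ) ^ 2 / (1 - t / τ) ^ (2 * β)) 0)
    (g : ℝ → ℝ → ℝ → ℝ) (hg : ∀ c x t, g c x t = c * max (x + c * t) 0)
    (η : ℝ) (hη : η < 0) (hneg : 1 + p * β * η < 0) :
    ∃ δ > 0, ∀ x : ℝ, 0 < x → x < δ →
      V x (η * x) = 0 ∧ g (p * β) x (η * x) = 0 := by
  have hm1 : 0 < m - 1 := by linarith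
  have hβpos : 0 < β := by rw [hβ]; positivity
  have hτ' : (0:ℝ) < -τ := by linarith
  have hξne : ξ ≠ 0 := ne_of_gt hξ
  have hτne : τ ≠ 0 := by linarith
  -- key inequality : ξ β η < τ
  have hkey : ξ * β * η < τ := by
    have h2 : ξ / (-τ) * β * η < -1 := by
      have h := hneg; rw [hp] at h; linarith
    rw [div_mul_eq_mul_div, div_mul_eq_mul_div] at h2
    have h3 := (div_lt_iff₀ hτ').mp h2
    linarith
  -- the function f and its derivative at 0
  set f : ℝ → ℝ := fun x => (1 - x / ξ) ^ 2 - (1 - η * x / τ) ^ (2 * β) with hfdef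
  set D : ℝ := 2 * β * η / τ - 2 / ξ with hDdef
  have hDpos : 0 < D := by
    have hnum : ξ * β * η - τ < 0 := by linarith
    have hden : ξ * τ < 0 := mul_neg_of_pos_of_neg hξ hτ
    have h4 : 0 < (ξ * β * η - τ) / (ξ * τ) := div_pos_of_neg_of_neg hnum hden
    have : D = 2 * ((ξ * β * η - τ) / (ξ * τ)) := by
      rw [hDdef]; field_simp
    rw [this]; linarith
  have hder : HasDerivAt f D 0 := by
    have h1 : HasDerivAt (fun x : ℝ => 1 - x / ξ) (-(1/ξ)) 0 := by
      simpa using ((hasDerivAt_id (0:ℝ)).div_const ξ).const_sub 1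
    have h1' : HasDerivAt (fun x : ℝ => (1 - x / ξ) ^ 2)
        (2 * (1 - 0 / ξ) ^ 1 * (-(1/ξ))) 0 := by
      simpa using h1.fun_pow 2
    have h2 : HasDerivAt (fun x : ℝ => 1 - η * x / τ) (-(η/τ)) 0 := by
      have : HasDerivAt (fun x : ℝ => η * x / τ) (η / τ) 0 := by
        simpa using (((hasDerivAt_id (0:ℝ)).const_mul η).div_const τ)
      simpa using this.const_sub 1
    have h2' := h2.rpow_const (p := 2*β) (Or.inl (by norm_num : (1:ℝ) - η * 0 / τ ≠ 0))
    have := h1'.fun_sub h2'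
    convert this using 1
    · rfl
    · rfl
    rw [hDdef]
    simp [Real.one_rpow]
    ring
  have hf0 : f 0 = 0 := by simp [hfdef, Real.one_rpow]
  -- eventually f x > 0 on the right of 0
  have hslope := hasDerivAt_iff_tendsto_slope.mp hder
  have hslope' : Tendsto (slope f 0) (nhdsWithin 0 (Set.Ioi 0)) (nhds D) :=
    hslope.mono_left (nhdsWithin_mono _ (fun x hx => ne_of_gt hx))
  have hev1 : ∀ᶠ x in nhdsWithin (0:ℝ) (Set.Ioi 0), 0 < slope f 0 x :=
    hslope'.eventually (eventually_gt_nhds hDpos)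
  have hratio : 0 < τ / η := div_pos_of_neg_of_neg hτ hη
  have hev2 : ∀ᶠ x in nhdsWithin (0:ℝ) (Set.Ioi 0), x < τ / η :=
    Filter.Eventually.filter_mono nhdsWithin_le_nhds (eventually_lt_nhds hratio)
  obtain ⟨u, hu, hsub⟩ := mem_nhdsGT_iff_exists_Ioo_subset.mp (hev1.and hev2)
  refine ⟨u, hu, fun x hx hxu => ?_⟩
  obtain ⟨hsl, hlt⟩ := hsub ⟨hx, hxu⟩
  -- positivity of f x
  have hfx : 0 < f x := by
    have hsl' : 0 < x⁻¹ * f x := by simpa [slope, hf0] using hsl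
    have := mul_pos hx hsl'
    rwa [← mul_assoc, mul_inv_cancel₀ (ne_of_gt hx), one_mul] at this
  -- base positivity
  have hbase : 0 < 1 - η * x / τ := by
    have h5 : τ < η * x := by
      have h := mul_lt_mul_of_neg_left hlt hη
      have he : η * (τ / η) = τ := by rw [mul_comm, div_mul_cancel₀ _ (ne_of_lt hη)]
      linarith
    have : η * x / τ < 1 := by
      rw [div_lt_one_of_neg hτ]; exact h5
    linarith
  have hBpos : 0 < (1 - η * x / τ) ^ (2*β) := Real.rpow_pos_of_pos hbase _
  constructor
  · rw [hV]
    have hmax : max (1 - (1 - x / ξ) ^ 2 / (1 - η * x / τ) ^ (2 * β)) 0 = 0 := by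
      apply max_eq_right
      have h6 : (1 - η * x / τ) ^ (2*β) ≤ (1 - x / ξ) ^ 2 := by
        have := hfx
        rw [hfdef] at this
        simp only at this
        linarith
      have h7 : (1:ℝ) ≤ (1 - x / ξ) ^ 2 / (1 - η * x / τ) ^ (2 * β) :=
        (one_le_div hBpos).mpr h6
      linarith
    rw [hmax, mul_zero]
  · rw [hg]
    have : x + p * β * (η * x) = x * (1 + p * β * η) := by ring
    have hneg' : x + p * β * (η * x) < 0 := by
      rw [this]; exact mul_neg_of_pos_of_neg hx hneg
    rw [max_eq_right (le_of_lt hneg'), mul_zero]
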